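/- For positive integers a, b, c with a ≤ c, the sum over all ordered tuples (B_1, …, B_c) of pairwise disjoint sets with union [b] such that B_{a+1}, …, B_c are nonempty, of the product |B_1|!·|B_2|!···|B_c|!, equals b! · C(b + a − 1, c − 1). -/

import Mathlib

open Finset in
open scoped Classical in
theorem aux_card_perm {b c : ℕ} (f : Fin b → Fin c) :
    (Finset.univ.filter fun g : Equiv.Perm (Fin b) => Monotone (f ∘ ⇑g)).card
      = ∏ i : Fin c, (Finset.univ.filter fun x => f x = i).card.factorial := by
  classical
  have hfilter : (Finset.univ.filter fun g : Equiv.Perm (Fin b) => Monotone (f ∘ ⇑g))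
      = Finset.univ.filter fun g : Equiv.Perm (Fin b) => f ∘ ⇑g = f ∘ ⇑(Tuple.sort f) := by
    ext g
    simp [Tuple.comp_sort_eq_comp_iff_monotone]
  rw [hfilter, ← Fintype.card_subtype]
  have E : {g : Equiv.Perm (Fin b) // f ∘ ⇑g = f ∘ ⇑(Tuple.sort f)}
      ≃ ∀ i : Fin c, {x // (f ∘ ⇑(Tuple.sort f)) x = i} ≃ {x // f x = i} :=
  { toFun := fun g i => g.1.subtypeEquiv fun x => by
      rw [← congrFun g.2 x]; exact Iff.rfl
    invFun := fun e =>
      ⟨(Equiv.sigmaFiberEquiv (f ∘ ⇑(Tuple.sort f))).symm.trans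
          ((Equiv.sigmaCongrRight e).trans (Equiv.sigmaFiberEquiv f)),
        funext fun x => (e ((f ∘ ⇑(Tuple.sort f)) x) ⟨x, rfl⟩).2⟩
    left_inv := fun g => Subtype.ext (Equiv.ext fun x => rfl)
    right_inv := fun e => by
      funext i
      ext ⟨x, hx⟩
      dsimp at hx ⊢
      subst hx
      rfl }
  rw [Fintype.card_congr E, Fintype.card_pi]
  refine Finset.prod_congr rfl fun i _ => ?_
  have e2 : {x // (f ∘ ⇑(Tuple.sort f)) x = i} ≃ {x // f x = i} :=
    (Tuple.sort f).subtypeEquiv fun x => Iff.rfl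
  rw [Fintype.card_equiv e2, Fintype.card_congr e2, Fintype.card_subtype]

open Finset in
theorem aux_card_tail (a c : ℕ) :
    (Finset.univ.filter fun i : Fin c => a ≤ (i : ℕ)).card = c - a := by
  classical
  rw [← Finset.card_image_of_injective _ Fin.val_injective]
  have : (Finset.univ.filter fun i : Fin c => a ≤ (i : ℕ)).image Fin.val = Finset.Ico a c := by
    ext n
    simp only [Finset.mem_image, Finset.mem_filter, Finset.mem_univ, true_and, Finset.mem_Ico]
    constructor
    · rintro ⟨i, hi, rfl⟩; exact ⟨hi, i.2⟩
    · rintro ⟨h1, h2⟩; exact ⟨⟨n, h2⟩, h1, rfl⟩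
  rw [this, Nat.card_Ico]

theorem aux_univ_val_map {b : ℕ} {α : Type*} (f : Fin b → α) :
    Multiset.map f Finset.univ.val = ↑(List.ofFn f) := by
  have : (Finset.univ.val : Multiset (Fin b)) = ↑(List.finRange b) := rfl
  rw [this, List.ofFn_eq_map]
  rfl

open Finset in
open scoped Classical in
theorem aux_card_monotone_tail (a b c : ℕ) (ha : 0 < a) (hc : 0 < c) (hac : a ≤ c)
    (hcb : c ≤ b + a) :
    (Finset.univ.filter fun h : Fin b → Fin c =>
        Monotone h ∧ ∀ i : Fin c, a ≤ (i : ℕ) →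
          (Finset.univ.filter fun x => h x = i).Nonempty).card
      = (b + a - 1).choose (c - 1) := by
  classical
  rw [← Fintype.card_subtype]
  -- Step 1: equiv with constrained Sym
  have key : ∀ h : Fin b → Fin c,
      (Multiset.map h Finset.univ.val).card = b := by
    intro h; simp
  let Φ : {h : Fin b → Fin c // Monotone h ∧ ∀ i : Fin c, a ≤ (i : ℕ) →
          (Finset.univ.filter fun x => h x = i).Nonempty} →
      {m : Sym (Fin c) b // ∀ i : Fin c, a ≤ (i : ℕ) → i ∈ m} :=
    fun h => ⟨⟨Multiset.map h.1 Finset.univ.val, key h.1⟩, by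
      intro i hi
      obtain ⟨x, hx⟩ := h.2.2 i hi
      simp only [Finset.mem_filter, Finset.mem_univ, true_and] at hx
      show i ∈ Multiset.map h.1 Finset.univ.val
      exact Multiset.mem_map.2 ⟨x, Finset.mem_univ x, hx⟩⟩
  have hΦbij : Function.Bijective Φ := by
    constructor
    · rintro ⟨h₁, hm₁, ht₁⟩ ⟨h₂, hm₂, ht₂⟩ hE
      have : Multiset.map h₁ Finset.univ.val = Multiset.map h₂ Finset.univ.val := by
        exact congrArg (fun s => ((s.1 : Sym (Fin c) b) : Multiset (Fin c))) hE
      rw [aux_univ_val_map, aux_univ_val_map, Multiset.coe_eq_coe] at this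
      have := List.Perm.eq_of_sortedLE hm₁.sortedLE_ofFn hm₂.sortedLE_ofFn this
      exact Subtype.ext (List.ofFn_injective this)
    · rintro ⟨⟨m, hmc⟩, hmem⟩
      have hl : m.toList.length = b := by rw [Multiset.length_toList]; exact hmc
      set f : Fin b → Fin c := fun j => m.toList.get (Fin.cast hl.symm j) with hf
      have hofn : List.ofFn f = m.toList := by
        apply List.ext_getElem
        · simp [hl]
        · intro i h1 h2
          simp [hf]
      set g : Fin b → Fin c := f ∘ ⇑(Tuple.sort f) with hg
      have hmg : Multiset.map g Finset.univ.val = m := by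
        rw [aux_univ_val_map]
        have hperm : (List.ofFn g).Perm (List.ofFn f) := (Tuple.sort f).ofFn_comp_perm f
        rw [Multiset.coe_eq_coe.2 hperm, hofn, Multiset.coe_toList]
      refine ⟨⟨g, Tuple.monotone_sort f, ?_⟩, ?_⟩
      · intro i hi
        have : i ∈ Multiset.map g Finset.univ.val := hmg ▸ hmem i hi
        obtain ⟨x, -, hx⟩ := Multiset.mem_map.1 this
        exact ⟨x, by simp [hx]⟩
      · exact Subtype.ext (Subtype.ext hmg)
  rw [Fintype.card_of_bijective hΦbij]
  -- Step 2: remove the forced tail elements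
  set T : Multiset (Fin c) := (Finset.univ.filter fun i : Fin c => a ≤ (i : ℕ)).val with hT
  have hTcard : Multiset.card T = c - a := aux_card_tail a c
  have hTnodup : T.Nodup := (Finset.univ.filter fun i : Fin c => a ≤ (i : ℕ)).nodup
  have hTmem : ∀ i : Fin c, i ∈ T ↔ a ≤ (i : ℕ) := by
    intro i; simp [hT]
  have hle : ∀ m : Sym (Fin c) b, (∀ i : Fin c, a ≤ (i : ℕ) → i ∈ m) → T ≤ ↑m := by
    intro m hm
    rw [Multiset.le_iff_subset hTnodup]
    intro i hi
    exact hm i ((hTmem i).1 hi)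
  have hkb : c - a ≤ b := by omega
  let E2 : {m : Sym (Fin c) b // ∀ i : Fin c, a ≤ (i : ℕ) → i ∈ m} ≃ Sym (Fin c) (b - (c - a)) :=
  { toFun := fun m => ⟨(m.1 : Multiset (Fin c)) - T, by
      rw [Multiset.card_sub (hle m.1 m.2), hTcard, Sym.card_coe]⟩
    invFun := fun s => ⟨⟨(s : Multiset (Fin c)) + T, by
      rw [Multiset.card_add, Sym.card_coe, hTcard]; omega⟩, by
      intro i hi
      show i ∈ (s : Multiset (Fin c)) + T
      exact Multiset.mem_add.2 (Or.inr ((hTmem i).2 hi))⟩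
    left_inv := fun m => Subtype.ext (Subtype.ext (by
      show (m.1 : Multiset (Fin c)) - T + T = (m.1 : Multiset (Fin c))
      exact tsub_add_cancel_of_le (hle m.1 m.2)))
    right_inv := fun s => Subtype.ext (by
      show (s : Multiset (Fin c)) + T - T = (s : Multiset (Fin c))
      exact add_tsub_cancel_right _ _) }
  rw [Fintype.card_congr E2, Sym.card_sym_eq_choose, Fintype.card_fin]
  have h1 : c + (b - (c - a)) - 1 = b + a - 1 := by omega
  have h2 : b - (c - a) = (b + a - 1) - (c - 1) := by omega
  rw [h1, h2, Nat.choose_symm (by omega)]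

open Finset in
open scoped Classical in
theorem stmt1 (a b c : ℕ) (ha : 0 < a) (hb : 0 < b) (hc : 0 < c) (hac : a ≤ c) :
    ∑ B ∈ Finset.univ.filter
        (fun B : Fin c → Finset (Fin b) =>
          (∀ i j, i ≠ j → Disjoint (B i) (B j)) ∧
          Finset.univ.biUnion B = Finset.univ ∧
          ∀ i : Fin c, a ≤ (i : ℕ) → (B i).Nonempty),
      ∏ i, Nat.factorial (B i).card
      = Nat.factorial b * Nat.choose (b + a - 1) (c - 1) := by
  classical
  by_cases hcb : c ≤ b + a
  · -- main case
    -- the fibers of a function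
    set fib : (Fin b → Fin c) → Fin c → Finset (Fin b) :=
      fun f i => Finset.univ.filter fun x => f x = i with hfib
    set F : Finset (Fin b → Fin c) :=
      Finset.univ.filter (fun f : Fin b → Fin c =>
        ∀ i : Fin c, a ≤ (i : ℕ) → (fib f i).Nonempty) with hF
    set toF : (Fin c → Finset (Fin b)) → (Fin b → Fin c) :=
      fun B x => if hx : ∃ i, x ∈ B i then hx.choose else ⟨0, hc⟩ with htoF
    have hkey : ∀ B : Fin c → Finset (Fin b),
        (∀ i j, i ≠ j → Disjoint (B i) (B j)) → Finset.univ.biUnion B = Finset.univ →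
        ∀ (x : Fin b) (i : Fin c), toF B x = i ↔ x ∈ B i := by
      intro B hd hcov x i
      have hex : ∃ i, x ∈ B i := by
        have hx : x ∈ Finset.univ.biUnion B := by rw [hcov]; exact mem_univ x
        obtain ⟨j, -, hj⟩ := mem_biUnion.1 hx
        exact ⟨j, hj⟩
      have htf : toF B x = hex.choose := dif_pos hex
      constructor
      · rintro rfl
        rw [htf]; exact hex.choose_spec
      · intro hxi
        rw [htf]
        by_contra hne
        exact (Finset.disjoint_left.1 (hd _ _ hne) hex.choose_spec) hxi
    have step1 : (∑ B ∈ Finset.univ.filter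
        (fun B : Fin c → Finset (Fin b) =>
          (∀ i j, i ≠ j → Disjoint (B i) (B j)) ∧
          Finset.univ.biUnion B = Finset.univ ∧
          ∀ i : Fin c, a ≤ (i : ℕ) → (B i).Nonempty),
        ∏ i, Nat.factorial (B i).card)
        = ∑ f ∈ F, ∏ i, Nat.factorial (fib f i).card := by
      refine Finset.sum_nbij' toF (fun f i => fib f i) ?_ ?_ ?_ ?_ ?_
      · intro B hB
        obtain ⟨-, hd, hcov, hne⟩ := mem_filter.1 hB
        refine mem_filter.2 ⟨mem_univ _, fun i hi => ?_⟩
        have : fib (toF B) i = B i := by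
          ext x
          simp only [hfib, mem_filter, mem_univ, true_and]
          exact hkey B hd hcov x i
        rw [this]
        exact hne i hi
      · intro f hf
        obtain ⟨-, hne⟩ := mem_filter.1 hf
        refine mem_filter.2 ⟨mem_univ _, ?_, ?_, hne⟩
        · intro i j hij
          rw [Finset.disjoint_left]
          intro x hx hx'
          simp only [hfib, mem_filter, mem_univ, true_and] at hx hx'
          exact hij (hx ▸ hx' ▸ rfl)
        · ext x
          simp only [mem_univ, iff_true]
          rw [mem_biUnion]
          exact ⟨f x, mem_univ _, mem_filter.2 ⟨mem_univ _, rfl⟩⟩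
      · intro B hB
        obtain ⟨-, hd, hcov, hne⟩ := mem_filter.1 hB
        funext i
        ext x
        simp only [hfib, mem_filter, mem_univ, true_and]
        exact hkey B hd hcov x i
      · intro f hf
        funext x
        have hmem : (fun i => fib f i) ∈ Finset.univ.filter
            (fun B : Fin c → Finset (Fin b) =>
              (∀ i j, i ≠ j → Disjoint (B i) (B j)) ∧
              Finset.univ.biUnion B = Finset.univ ∧
              ∀ i : Fin c, a ≤ (i : ℕ) → (B i).Nonempty) := by
          obtain ⟨-, hne⟩ := mem_filter.1 hf
          refine mem_filter.2 ⟨mem_univ _, ?_, ?_, hne⟩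
          · intro i j hij
            rw [Finset.disjoint_left]
            intro x hx hx'
            simp only [hfib, mem_filter, mem_univ, true_and] at hx hx'
            exact hij (hx ▸ hx' ▸ rfl)
          · ext y
            simp only [mem_univ, iff_true]
            rw [mem_biUnion]
            exact ⟨f y, mem_univ _, mem_filter.2 ⟨mem_univ _, rfl⟩⟩
        obtain ⟨-, hd, hcov, -⟩ := mem_filter.1 hmem
        exact (hkey _ hd hcov x (f x)).2 (by simp [hfib])
      · intro B hB
        obtain ⟨-, hd, hcov, hne⟩ := mem_filter.1 hB
        refine Finset.prod_congr rfl fun i _ => ?_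
        congr 1
        congr 1
        ext x
        simp only [hfib, mem_filter, mem_univ, true_and]
        exact (hkey B hd hcov x i).symm
    rw [step1]
    have step2 : ∑ f ∈ F, ∏ i, Nat.factorial (fib f i).card
        = ∑ f ∈ F, (Finset.univ.filter fun g : Equiv.Perm (Fin b) =>
            Monotone (f ∘ ⇑g)).card :=
      Finset.sum_congr rfl fun f _ => (aux_card_perm f).symm
    rw [step2]
    have step3 : ∑ f ∈ F, (Finset.univ.filter fun g : Equiv.Perm (Fin b) =>
            Monotone (f ∘ ⇑g)).card
        = ∑ g ∈ (Finset.univ : Finset (Equiv.Perm (Fin b))),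
            (F.filter fun f => Monotone (f ∘ ⇑g)).card := by
      simp_rw [Finset.card_filter]
      exact Finset.sum_comm
    rw [step3]
    have step4 : ∀ g : Equiv.Perm (Fin b),
        (F.filter fun f => Monotone (f ∘ ⇑g)).card
        = (Finset.univ.filter fun h : Fin b → Fin c =>
            Monotone h ∧ ∀ i : Fin c, a ≤ (i : ℕ) →
              (Finset.univ.filter fun x => h x = i).Nonempty).card := by
      intro g
      refine Finset.card_nbij' (fun f => f ∘ ⇑g) (fun h => h ∘ ⇑g⁻¹) ?_ ?_ ?_ ?_
      · intro f hf
        obtain ⟨hfF, hmono⟩ := mem_filter.1 hf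
        obtain ⟨-, hne⟩ := mem_filter.1 hfF
        refine mem_filter.2 ⟨mem_univ _, hmono, fun i hi => ?_⟩
        obtain ⟨y, hy⟩ := hne i hi
        simp only [hfib, mem_filter, mem_univ, true_and] at hy
        exact ⟨g⁻¹ y, by simp [hy]⟩
      · intro h hh
        obtain ⟨-, hmono, hne⟩ := mem_filter.1 hh
        have hcomp : (h ∘ ⇑g⁻¹) ∘ ⇑g = h := by funext x; simp
        refine mem_filter.2 ⟨mem_filter.2 ⟨mem_univ _, fun i hi => ?_⟩, by rw [hcomp]; exact hmono⟩
        obtain ⟨y, hy⟩ := hne i hi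
        simp only [mem_filter, mem_univ, true_and] at hy
        exact ⟨g y, by simp [hfib, hy]⟩
      · intro f _; funext x; simp
      · intro h _; funext x; simp
    simp_rw [step4]
    rw [Finset.sum_const, smul_eq_mul, Finset.card_univ, Fintype.card_perm, Fintype.card_fin,
      aux_card_monotone_tail a b c ha hc hac hcb]
  · -- degenerate case : b + a < c
    rw [Nat.choose_eq_zero_of_lt (by omega), mul_zero]
    rw [Finset.filter_eq_empty_iff.2 ?_, Finset.sum_empty]
    rintro B -
    rintro ⟨hd, hcov, hne⟩
    set Tf := Finset.univ.filter (fun i : Fin c => a ≤ (i : ℕ)) with hTf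
    have h1 : Tf.card = c - a := aux_card_tail a c
    have h2 : (Tf.biUnion B).card = ∑ i ∈ Tf, (B i).card :=
      Finset.card_biUnion fun i _ j _ hij => hd i j hij
    have h3 : Tf.card ≤ ∑ i ∈ Tf, (B i).card := by
      rw [Finset.card_eq_sum_ones Tf]
      exact Finset.sum_le_sum fun i hi =>
        Finset.Nonempty.card_pos (hne i (by simpa [hTf] using hi))
    have h4 : (Tf.biUnion B).card ≤ b := by
      simpa using Finset.card_le_univ (Tf.biUnion B)
    omega
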